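/- Let R be a commutative ring, I an ideal of R, and n ≥ 2. Then every diagonal matrix d = diag(ε₁, …, εₙ) ∈ SL(n,R) with εᵢ ≡ 1 (mod I) for all i belongs to the relative elementary subgroup E(n,R,I). (The relative torus is contained in the relative elementary subgroup, case Φ = A_{n−1}; consequence of the identity h_α(1+s) = x_α((1+s)⁻¹ − 1) · z_{−α}(−s, (1+s)⁻¹) · x_{−α}(s(1+s)).) -/

import Mathlib

open Matrix

/-- The elementary transvection `t_{ij}(ξ) = 1 + ξE_{ij}` as an element of `SL(n,R)`. -/
def tSL {R : Type*} [CommRing R] {n : ℕ} (i j : Fin n) (hij : i ≠ j) (ξ : R) :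
    Matrix.SpecialLinearGroup (Fin n) R :=
  ⟨Matrix.transvection i j ξ, Matrix.det_transvection_of_ne i j hij ξ⟩

/-- The elementary subgroup `E(n,R)` of `SL(n,R)`. -/
def elemGroup (n : ℕ) (R : Type*) [CommRing R] :
    Subgroup (Matrix.SpecialLinearGroup (Fin n) R) :=
  Subgroup.closure { g | ∃ i j, ∃ hij : i ≠ j, ∃ ξ : R, g = tSL i j hij ξ }

/-- The relative elementary subgroup `E(n,R,I)`. -/
def relElemGroup (n : ℕ) {R : Type*} [CommRing R] (I : Ideal R) :
    Subgroup (Matrix.SpecialLinearGroup (Fin n) R) :=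
  Subgroup.closure
    { g | ∃ e ∈ elemGroup n R, ∃ i j, ∃ hij : i ≠ j, ∃ s ∈ I, g = e * tSL i j hij s * e⁻¹ }

section Aux

variable {R : Type*} [CommRing R] {n : ℕ}

lemma tSL_mem_elem {i j : Fin n} (hij : i ≠ j) (ξ : R) : tSL i j hij ξ ∈ elemGroup n R :=
  Subgroup.subset_closure ⟨i, j, hij, ξ, rfl⟩

lemma tSL_mem_rel {I : Ideal R} {i j : Fin n} (hij : i ≠ j) {s : R} (hs : s ∈ I) :
    tSL i j hij s ∈ relElemGroup n I :=
  Subgroup.subset_closure ⟨1, one_mem _, i, j, hij, s, hs, by rw [one_mul, inv_one, mul_one]⟩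

lemma conj_tSL_mem_rel {I : Ideal R} {e : Matrix.SpecialLinearGroup (Fin n) R}
    (he : e ∈ elemGroup n R) {i j : Fin n} (hij : i ≠ j) {s : R} (hs : s ∈ I) :
    e * tSL i j hij s * e⁻¹ ∈ relElemGroup n I :=
  Subgroup.subset_closure ⟨e, he, i, j, hij, s, hs, rfl⟩

lemma tSL_mul (i j : Fin n) (hij : i ≠ j) (a b : R) :
    tSL i j hij a * tSL i j hij b = tSL i j hij (a + b) := by
  apply Subtype.ext
  show Matrix.transvection i j a * Matrix.transvection i j b = Matrix.transvection i j (a + b)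
  exact Matrix.transvection_mul_transvection_same i j hij a b

lemma tSL_inv (i j : Fin n) (hij : i ≠ j) (a : R) : (tSL i j hij a)⁻¹ = tSL i j hij (-a) := by
  apply inv_eq_of_mul_eq_one_right
  rw [tSL_mul]
  apply Subtype.ext
  show Matrix.transvection i j (a + -a) = (1 : Matrix (Fin n) (Fin n) R)
  rw [add_neg_cancel, Matrix.transvection_zero]

/-- The key matrix identity behind `h_α(1+s) ∈ E(n,R,I)`. -/
lemma hdiag_mem (I : Ideal R) {i j : Fin n} (hij : i ≠ j) {ε ε' : R} (hεε : ε * ε' = 1)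
    (hε : ε - 1 ∈ I) (h : Matrix.SpecialLinearGroup (Fin n) R)
    (hh : (h : Matrix (Fin n) (Fin n) R) =
      Matrix.diagonal fun k => if k = i then ε else if k = j then ε' else 1) :
    h ∈ relElemGroup n I := by
  have hε' : ε' - 1 ∈ I := by
    have hrw : ε' - 1 = (-ε') * (ε - 1) := by linear_combination hεε
    rw [hrw]; exact I.mul_mem_left _ hε
  have key : h = tSL i j hij (ε' - 1) *
      (tSL i j hij (-ε') * tSL j i hij.symm (1 - ε) * (tSL i j hij (-ε'))⁻¹) *
      tSL j i hij.symm ((ε - 1) * ε) := by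
    rw [tSL_inv, neg_neg]
    apply Subtype.ext
    rw [hh]
    show _ = Matrix.transvection i j (ε' - 1) *
      (Matrix.transvection i j (-ε') * Matrix.transvection j i (1 - ε) *
        Matrix.transvection i j ε') * Matrix.transvection j i ((ε - 1) * ε)
    have z1 : ∀ a b : R, single i j a * single i j b
        = (0 : Matrix (Fin n) (Fin n) R) := fun a b => single_mul_single_of_ne (c := a) i j _ hij.symm b
    have z2 : ∀ a b : R, single j i a * single j i b
        = (0 : Matrix (Fin n) (Fin n) R) := fun a b => single_mul_single_of_ne (c := a) j i _ hij b
    have z3 : ∀ a b : R, single i i a * single j i b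
        = (0 : Matrix (Fin n) (Fin n) R) := fun a b => single_mul_single_of_ne (c := a) i i _ hij b
    have z4 : ∀ a b : R, single j j a * single i j b
        = (0 : Matrix (Fin n) (Fin n) R) := fun a b => single_mul_single_of_ne (c := a) j j _ hij.symm b
    have z5 : ∀ a b : R, single i j a * single i i b
        = (0 : Matrix (Fin n) (Fin n) R) := fun a b => single_mul_single_of_ne (c := a) i j _ hij.symm b
    have z6 : ∀ a b : R, single j i a * single j j b
        = (0 : Matrix (Fin n) (Fin n) R) := fun a b => single_mul_single_of_ne (c := a) j i _ hij b
    simp only [Matrix.transvection, add_mul, mul_add, one_mul, mul_one, z1, z2, z3, z4, z5, z6,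
      single_mul_single_same, add_zero, zero_add, zero_mul, mul_zero]
    ext a b
    simp only [Matrix.diagonal_apply, Matrix.add_apply, Matrix.one_apply, Matrix.single,
      Matrix.of_apply]
    by_cases hai : a = i
    · by_cases hbi : b = i
      · simp only [hai, hbi]
        simp [hij, hij.symm]
        linear_combination (ε - ε^2) * hεε
      · by_cases hbj : b = j
        · simp only [hai, hbj]
          simp [hij, hij.symm]
          linear_combination -hεε
        · simp [hai, hbi, hbj, hij, hij.symm, Ne.symm hbi, Ne.symm hbj]
    · by_cases haj : a = j
      · by_cases hbi : b = i
        · simp only [haj, hbi]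
          simp [hij, hij.symm]
          linear_combination (ε-1)^2 * hεε
        · by_cases hbj : b = j
          · simp only [haj, hbj]
            simp [hij, hij.symm]
            linear_combination hεε
          · simp [haj, hbi, hbj, hij, hij.symm, Ne.symm hbi, Ne.symm hbj]
      · simp [hai, haj, Ne.symm hai, Ne.symm haj]
  rw [key]
  refine mul_mem (mul_mem (tSL_mem_rel hij hε')
    (conj_tSL_mem_rel (tSL_mem_elem hij (-ε')) hij.symm ?_)) (tSL_mem_rel hij.symm ?_)
  · have : (1 : R) - ε = -(ε - 1) := by ring
    rw [this]; exact I.neg_mem hε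
  · exact I.mul_mem_right ε hε

lemma eq_one_of_diag (d : Matrix.SpecialLinearGroup (Fin n) R)
    (hdiag : ∀ a b : Fin n, a ≠ b → (d : Matrix (Fin n) (Fin n) R) a b = 0)
    (hall : ∀ i : Fin n, (d : Matrix (Fin n) (Fin n) R) i i = 1) : d = 1 := by
  apply Subtype.ext
  show (d : Matrix (Fin n) (Fin n) R) = 1
  ext a b
  rcases eq_or_ne a b with rfl | hab
  · rw [hall a, Matrix.one_apply_eq]
  · rw [hdiag a b hab, Matrix.one_apply_ne hab]

lemma coe_eq_diagonal (d : Matrix.SpecialLinearGroup (Fin n) R)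
    (hdiag : ∀ a b : Fin n, a ≠ b → (d : Matrix (Fin n) (Fin n) R) a b = 0) :
    (d : Matrix (Fin n) (Fin n) R) =
      Matrix.diagonal (fun k => (d : Matrix (Fin n) (Fin n) R) k k) := by
  ext a b
  rcases eq_or_ne a b with rfl | hab
  · rw [Matrix.diagonal_apply_eq]
  · rw [hdiag a b hab, Matrix.diagonal_apply_ne _ hab]

lemma prod_diag_eq_one (d : Matrix.SpecialLinearGroup (Fin n) R)
    (hdiag : ∀ a b : Fin n, a ≠ b → (d : Matrix (Fin n) (Fin n) R) a b = 0) :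
    ∏ k, (d : Matrix (Fin n) (Fin n) R) k k = 1 := by
  have hd := d.2
  rw [show d.val = (d : Matrix (Fin n) (Fin n) R) from rfl, coe_eq_diagonal d hdiag,
    Matrix.det_diagonal] at hd
  exact hd

lemma aux_induction (I : Ideal R) (hn : 2 ≤ n) :
    ∀ (j : ℕ) (d : Matrix.SpecialLinearGroup (Fin n) R),
      (∀ a b : Fin n, a ≠ b → (d : Matrix (Fin n) (Fin n) R) a b = 0) →
      (∀ i : Fin n, (d : Matrix (Fin n) (Fin n) R) i i - 1 ∈ I) →
      (∀ i : Fin n, (i : ℕ) + j < n → (d : Matrix (Fin n) (Fin n) R) i i = 1) →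
      d ∈ relElemGroup n I := by
  intro j
  induction j with
  | zero =>
    intro d hdiag hI h1
    rw [eq_one_of_diag d hdiag (fun i => h1 i (by simpa using i.isLt))]
    exact one_mem _
  | succ j ih =>
    intro d hdiag hI h1
    rcases Nat.eq_zero_or_pos j with rfl | hj
    · -- one possibly non-trivial entry remains, at position n-1; determinant forces it to be 1
      have hLlt : n - 1 < n := by omega
      set L : Fin n := ⟨n - 1, hLlt⟩ with hL
      have hprod : ∏ k, (d : Matrix (Fin n) (Fin n) R) k k = (d : Matrix (Fin n) (Fin n) R) L L :=
        Finset.prod_eq_single L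
          (fun k _ hk => h1 k (by
            have : (k : ℕ) ≠ n - 1 := fun hkL => hk (Fin.ext hkL)
            have := k.isLt; omega))
          (by simp)
      have hLL : (d : Matrix (Fin n) (Fin n) R) L L = 1 := by
        rw [← hprod]; exact prod_diag_eq_one d hdiag
      refine (eq_one_of_diag d hdiag fun i => ?_) ▸ one_mem _
      rcases eq_or_ne i L with rfl | hiL
      · exact hLL
      · exact h1 i (by
          have : (i : ℕ) ≠ n - 1 := fun hkL => hiL (Fin.ext hkL)
          have := i.isLt; omega)
    · rcases le_or_gt n j with hnj | hjn
      · exact ih d hdiag hI (fun i hi => absurd hi (by omega))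
      · -- main step at positions m, m+1 with m = n-1-j
        set m : ℕ := n - 1 - j with hm
        have hm1 : m + 1 < n := by omega
        set i₀ : Fin n := ⟨m, by omega⟩ with hi₀
        set i₁ : Fin n := ⟨m + 1, hm1⟩ with hi₁
        have hne : i₀ ≠ i₁ := by
          simp only [hi₀, hi₁, Ne, Fin.mk.injEq]; omega
        set dM : Matrix (Fin n) (Fin n) R := (d : Matrix (Fin n) (Fin n) R) with hdM
        set ε : R := dM i₀ i₀ with hε
        set ε' : R := ∏ k ∈ Finset.univ.erase i₀, dM k k with hε'
        have hdet : ∏ k, dM k k = 1 := prod_diag_eq_one d hdiag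
        have hεε : ε * ε' = 1 := by
          have hh := Finset.mul_prod_erase Finset.univ (fun k => dM k k) (Finset.mem_univ i₀)
          rw [hε, hε', hh]
          exact hdet
        have split : ∀ g : Fin n → R,
            ∏ k, g k = g i₀ * (g i₁ * ∏ k ∈ (Finset.univ.erase i₀).erase i₁, g k) := by
          intro g
          rw [Finset.mul_prod_erase _ g
            (Finset.mem_erase.mpr ⟨hne.symm, Finset.mem_univ _⟩),
            Finset.mul_prod_erase _ g (Finset.mem_univ i₀)]
        -- the hyperbolic element h = diag(..., ε, ε', ...)
        set f : Fin n → R := fun k => if k = i₀ then ε else if k = i₁ then ε' else 1 with hf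
        have hf0 : f i₀ = ε := by simp [hf]
        have hf1 : f i₁ = ε' := by simp [hf, hne.symm]
        have hfo : ∀ k : Fin n, k ≠ i₀ → k ≠ i₁ → f k = 1 := by
          intro k h0 h1'
          simp [hf, h0, h1']
        have hfdet : Matrix.det (Matrix.diagonal f) = 1 := by
          rw [Matrix.det_diagonal, split f]
          have hrest : ∏ k ∈ (Finset.univ.erase i₀).erase i₁, f k = 1 := by
            apply Finset.prod_eq_one
            intro k hk
            rcases Finset.mem_erase.mp hk with ⟨hk1, hk2⟩
            rcases Finset.mem_erase.mp hk2 with ⟨hk0, _⟩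
            exact hfo k hk0 hk1
          rw [hf0, hf1, hrest, mul_one, hεε]
        set hEl : Matrix.SpecialLinearGroup (Fin n) R := ⟨Matrix.diagonal f, hfdet⟩ with hhEl
        have hmem_h : hEl ∈ relElemGroup n I :=
          hdiag_mem I hne hεε (hε ▸ hI i₀) hEl rfl
        -- the remaining diagonal part d'
        set f' : Fin n → R :=
          fun k => if k = i₀ then 1 else if k = i₁ then ε * dM i₁ i₁ else dM k k with hf'
        have hval0 : f' i₀ = 1 := by simp [hf']
        have hval1 : f' i₁ = ε * dM i₁ i₁ := by simp [hf', hne.symm]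
        have hval : ∀ k : Fin n, k ≠ i₀ → k ≠ i₁ → f' k = dM k k := by
          intro k h0 h1'
          simp [hf', h0, h1']
        have hrest' : ∏ k ∈ (Finset.univ.erase i₀).erase i₁, f' k
            = ∏ k ∈ (Finset.univ.erase i₀).erase i₁, dM k k := by
          apply Finset.prod_congr rfl
          intro k hk
          rcases Finset.mem_erase.mp hk with ⟨hk1, hk2⟩
          rcases Finset.mem_erase.mp hk2 with ⟨hk0, _⟩
          exact hval k hk0 hk1
        have hf'det : Matrix.det (Matrix.diagonal f') = 1 := by
          rw [Matrix.det_diagonal, split f', hrest', hval0, hval1, one_mul]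
          have hd2 : ∏ k, dM k k
              = dM i₀ i₀ * (dM i₁ i₁ * ∏ k ∈ (Finset.univ.erase i₀).erase i₁, dM k k) := split _
          rw [hd2] at hdet
          rw [hε]
          linear_combination hdet
        set d' : Matrix.SpecialLinearGroup (Fin n) R := ⟨Matrix.diagonal f', hf'det⟩ with hd'
        have hsplit_d : d = hEl * d' := by
          apply Subtype.ext
          show dM = Matrix.diagonal f * Matrix.diagonal f'
          rw [Matrix.diagonal_mul_diagonal, hdM, coe_eq_diagonal d hdiag]
          apply congrArg Matrix.diagonal
          funext k
          show (d : Matrix (Fin n) (Fin n) R) k k = f k * f' k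
          rw [← hdM]
          by_cases hk0 : k = i₀
          · rw [hk0, hval0, hf0, hε, mul_one]
          · by_cases hk1 : k = i₁
            · rw [hk1, hval1, hf1]
              linear_combination (-(dM i₁ i₁)) * hεε
            · rw [hval k hk0 hk1, hfo k hk0 hk1, one_mul]
        have hd'diag : ∀ a b : Fin n, a ≠ b → (d' : Matrix (Fin n) (Fin n) R) a b = 0 := by
          intro a b hab
          show Matrix.diagonal f' a b = 0
          exact Matrix.diagonal_apply_ne _ hab
        have hd'I : ∀ i : Fin n, (d' : Matrix (Fin n) (Fin n) R) i i - 1 ∈ I := by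
          intro i
          show Matrix.diagonal f' i i - 1 ∈ I
          rw [Matrix.diagonal_apply_eq]
          by_cases hk0 : i = i₀
          · rw [hk0, hval0]
            simpa using I.zero_mem
          · by_cases hk1 : i = i₁
            · rw [hk1, hval1]
              have hrw : ε * dM i₁ i₁ - 1 = ε * (dM i₁ i₁ - 1) + (ε - 1) := by ring
              rw [hrw]
              refine I.add_mem (I.mul_mem_left ε (hI i₁)) ?_
              rw [hε]
              exact hI i₀
            · rw [hval i hk0 hk1]
              exact hI i
        have hd'1 : ∀ i : Fin n, (i : ℕ) + j < n → (d' : Matrix (Fin n) (Fin n) R) i i = 1 := by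
          intro i hi
          show Matrix.diagonal f' i i = 1
          rw [Matrix.diagonal_apply_eq]
          by_cases hk0 : i = i₀
          · rw [hk0, hval0]
          · have hk1 : i ≠ i₁ := by
              intro h
              have hv : (i : ℕ) = m + 1 := by rw [h, hi₁]
              omega
            rw [hval i hk0 hk1]
            apply h1
            have hvne : (i : ℕ) ≠ m := by
              intro h
              exact hk0 (by rw [hi₀]; exact Fin.ext h)
            omega
        rw [hsplit_d]
        exact mul_mem hmem_h (ih d' hd'diag hd'I hd'1)

end Aux

/-- A diagonal matrix in `SL(n,R)` with all diagonal entries `≡ 1 (mod I)` belongs to the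
relative elementary subgroup `E(n,R,I)`. -/
theorem diagonal_mem_relElem {R : Type*} [CommRing R] (I : Ideal R) (n : ℕ) (hn : 2 ≤ n)
    (d : Matrix.SpecialLinearGroup (Fin n) R)
    (hdiag : ∀ i j : Fin n, i ≠ j → (d : Matrix (Fin n) (Fin n) R) i j = 0)
    (hI : ∀ i : Fin n, (d : Matrix (Fin n) (Fin n) R) i i - 1 ∈ I) :
    d ∈ relElemGroup n I := by
  exact aux_induction I hn n d hdiag hI (fun i hi => absurd hi (by omega))
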